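/- For all real $\alpha > -1$ and all integers $n \ge 2$, one has $\sum_{j=0}^5 \nu_j(\alpha) n^j > 0$, where $\nu_0(\alpha)=\tfrac{8}{125}(1+\alpha)^2(2+\alpha)(4+\alpha)$, $\nu_1(\alpha)=\tfrac{3}{250}(1+\alpha)(16\alpha^3+152\alpha^2+439\alpha-52)$, $\nu_2(\alpha)=\tfrac{1}{500}(96\alpha^4+1363\alpha^3+5656\alpha^2+9167\alpha+2828)$, $\nu_3(\alpha)=\tfrac{1}{250}(16\alpha^4+363\alpha^3+2506\alpha^2+7167\alpha+4708)$, $\nu_4(\alpha)=\tfrac{1}{100}(23\alpha^3+446\alpha^2+1657\alpha+2164)$, $\nu_5(\alpha)=\tfrac{3}{5}(5\alpha+16)$. -/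

import Mathlib

set_option maxHeartbeats 1000000 in
/-- For all real `α > -1` and all integers `n ≥ 2`,
`∑_{j=0}^5 νⱼ(α) nʲ > 0` for the listed polynomials `νⱼ`. -/
theorem stmt12 (α : ℝ) (hα : -1 < α) (n : ℕ) (hn : 2 ≤ n)
    (ν : ℕ → ℝ)
    (hν0 : ν 0 = (8 / 125) * (1 + α) ^ 2 * (2 + α) * (4 + α))
    (hν1 : ν 1 = (3 / 250) * (1 + α) *
      (16 * α ^ 3 + 152 * α ^ 2 + 439 * α - 52))
    (hν2 : ν 2 = (1 / 500) *
      (96 * α ^ 4 + 1363 * α ^ 3 + 5656 * α ^ 2 + 9167 * α + 2828))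
    (hν3 : ν 3 = (1 / 250) *
      (16 * α ^ 4 + 363 * α ^ 3 + 2506 * α ^ 2 + 7167 * α + 4708))
    (hν4 : ν 4 = (1 / 100) * (23 * α ^ 3 + 446 * α ^ 2 + 1657 * α + 2164))
    (hν5 : ν 5 = (3 / 5) * (5 * α + 16)) :
    0 < ∑ j ∈ Finset.range 6, ν j * (n : ℝ) ^ j := by
  have hn' : (2:ℝ) ≤ (n:ℝ) := by exact_mod_cast hn
  set a : ℝ := 1 + α with ha_def
  set x : ℝ := (n:ℝ) - 2 with hx_def
  have ha : (0:ℝ) < a := by rw [ha_def]; linarith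
  have hx : (0:ℝ) ≤ x := by rw [hx_def]; linarith
  have m : ∀ i j : ℕ, (0:ℝ) ≤ a ^ i * x ^ j :=
    fun i j => mul_nonneg (pow_nonneg ha.le i) (pow_nonneg hx j)
  have key : ∑ j ∈ Finset.range 6, ν j * (n : ℝ) ^ j =
      (1674 / 5 : ℝ) +
      (3978 / 5 : ℝ) * (a ^ 0 * x ^ 1) +
      (7401 / 10 : ℝ) * (a ^ 0 * x ^ 2) +
      (1686 / 5 : ℝ) * (a ^ 0 * x ^ 3) +
      (753 / 10 : ℝ) * (a ^ 0 * x ^ 4) +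
      (33 / 5 : ℝ) * (a ^ 0 * x ^ 5) +
      (8379 / 25 : ℝ) * (a ^ 1 * x ^ 0) +
      (33387 / 50 : ℝ) * (a ^ 1 * x ^ 1) +
      (2598 / 5 : ℝ) * (a ^ 1 * x ^ 2) +
      (4986 / 25 : ℝ) * (a ^ 1 * x ^ 3) +
      (1917 / 50 : ℝ) * (a ^ 1 * x ^ 4) +
      (3 : ℝ) * (a ^ 1 * x ^ 5) +
      (16308 / 125 : ℝ) * (a ^ 2 * x ^ 0) +
      (53151 / 250 : ℝ) * (a ^ 2 * x ^ 1) +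
      (65539 / 500 : ℝ) * (a ^ 2 * x ^ 2) +
      (9053 / 250 : ℝ) * (a ^ 2 * x ^ 3) +
      (377 / 100 : ℝ) * (a ^ 2 * x ^ 4) +
      (2979 / 125 : ℝ) * (a ^ 3 * x ^ 0) +
      (3849 / 125 : ℝ) * (a ^ 3 * x ^ 1) +
      (7327 / 500 : ℝ) * (a ^ 3 * x ^ 2) +
      (759 / 250 : ℝ) * (a ^ 3 * x ^ 3) +
      (23 / 100 : ℝ) * (a ^ 3 * x ^ 4) +
      (216 / 125 : ℝ) * (a ^ 4 * x ^ 0) +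
      (216 / 125 : ℝ) * (a ^ 4 * x ^ 1) +
      (72 / 125 : ℝ) * (a ^ 4 * x ^ 2) +
      (8 / 125 : ℝ) * (a ^ 4 * x ^ 3) := by
    have hna : (n:ℝ) = x + 2 := by rw [hx_def]; ring
    have hal : α = a - 1 := by rw [ha_def]; ring
    simp only [Finset.sum_range_succ, Finset.sum_range_zero,
      hν0, hν1, hν2, hν3, hν4, hν5, hna, hal]
    ring
  rw [key]
  repeat' apply add_pos_of_pos_of_nonneg
  all_goals first
    | exact mul_nonneg (by norm_num) (m _ _)
    | norm_num
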